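/- For each n ∈ ℕ there exists B > 0 such that for all finitely supported sequences {c_{k,l,m}} ∈ ℓ²(ℤ³), ‖Σ_{k,l,m} c_{k,l,m} L_{(2k,l,m)}φₙ‖²_{L²} ≤ B ‖{c_{k,l,m}}‖²_{ℓ²}; in fact one may take B = 2^{n−1}. -/

import Mathlib

open MeasureTheory

/-- Heisenberg group multiplication on ℝ³. -/
noncomputable def Hmul (a b : ℝ × ℝ × ℝ) : ℝ × ℝ × ℝ :=
  (a.1 + b.1, a.2.1 + b.2.1, a.2.2 + b.2.2 + (b.1 * a.2.1 - b.2.1 * a.1) / 2)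

/-- Heisenberg group inverse. -/
noncomputable def Hinv (a : ℝ × ℝ × ℝ) : ℝ × ℝ × ℝ := (-a.1, -a.2.1, -a.2.2)

/-- Group convolution on the Heisenberg group. -/
noncomputable def Hconv (f g : ℝ × ℝ × ℝ → ℝ) : ℝ × ℝ × ℝ → ℝ :=
  fun p => ∫ q : ℝ × ℝ × ℝ, f (Hmul p (Hinv q)) * g q

/-- The fundamental domain Q = [0,2]×[0,1]×[0,1]. -/
noncomputable def Q : Set (ℝ × ℝ × ℝ) :=
  Set.Icc (0 : ℝ) 2 ×ˢ Set.Icc (0 : ℝ) 1 ×ˢ Set.Icc (0 : ℝ) 1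

/-- The B-splines on the Heisenberg group: φ₁ = (1/√2)·χ_Q, φₙ = φₙ₋₁ * φ₁. -/
noncomputable def phi : ℕ → (ℝ × ℝ × ℝ → ℝ)
  | 0 => fun _ => 0
  | 1 => fun p => Q.indicator (fun _ => (Real.sqrt 2)⁻¹) p
  | (n + 2) => Hconv (phi (n + 1)) (phi 1)

/-- Left translation on the Heisenberg group. -/
noncomputable def Ltr (a : ℝ × ℝ × ℝ) (f : ℝ × ℝ × ℝ → ℝ) : ℝ × ℝ × ℝ → ℝ :=
  fun p => f (Hmul (Hinv a) p)

open scoped ENNReal NNReal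

lemma Hmul_assoc (a b c : ℝ × ℝ × ℝ) : Hmul (Hmul a b) c = Hmul a (Hmul b c) := by
  simp only [Hmul, Prod.mk.injEq]
  refine ⟨by ring, by ring, by ring⟩

lemma Hinv_Hmul (a b : ℝ × ℝ × ℝ) : Hinv (Hmul a b) = Hmul (Hinv b) (Hinv a) := by
  simp only [Hmul, Hinv, Prod.mk.injEq]
  refine ⟨by ring, by ring, by ring⟩

lemma Hmul_cancel_left (a b : ℝ × ℝ × ℝ) : Hmul a (Hmul (Hinv a) b) = b := by
  obtain ⟨x, y, t⟩ := b
  simp only [Hmul, Hinv, Prod.mk.injEq]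
  refine ⟨by ring, by ring, by ring⟩

lemma Hcont_left (b : ℝ × ℝ × ℝ) : Continuous (fun p : ℝ × ℝ × ℝ => Hmul b p) := by
  unfold Hmul; fun_prop

lemma Hcont_pair : Continuous (fun z : (ℝ × ℝ × ℝ) × (ℝ × ℝ × ℝ) => Hmul z.1 (Hinv z.2)) := by
  unfold Hmul Hinv; fun_prop

/-- any unipotent-affine shear map preserves volume -/
lemma mp_aux (u v w α β : ℝ) :
    MeasurePreserving (fun p : ℝ × ℝ × ℝ =>
      ((p.1 + u, p.2.1 + v, p.2.2 + w + α * p.1 + β * p.2.1) : ℝ × ℝ × ℝ)) volume volume := by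
  have inner : ∀ a : ℝ, MeasurePreserving
      (fun c : ℝ × ℝ => ((c.1 + v, c.2 + (w + α * a + β * c.1)) : ℝ × ℝ)) volume volume := by
    intro a
    rw [Measure.volume_eq_prod]
    exact (measurePreserving_add_right volume v).skew_product
      (g := fun y t => t + (w + α * a + β * y)) (by fun_prop)
      (ae_of_all _ fun y => map_add_right_eq_self volume (w + α * a + β * y))
  have outer : MeasurePreserving
      (fun p : ℝ × (ℝ × ℝ) => ((p.1 + u, (p.2.1 + v, p.2.2 + (w + α * p.1 + β * p.2.1))) : ℝ × (ℝ × ℝ)))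
      volume volume := by
    rw [Measure.volume_eq_prod]
    exact (measurePreserving_add_right volume u).skew_product
      (g := fun a (c : ℝ × ℝ) => ((c.1 + v, c.2 + (w + α * a + β * c.1)) : ℝ × ℝ)) (by fun_prop)
      (ae_of_all _ fun a => by
        rw [show (volume : Measure (ℝ × ℝ)) = (volume : Measure ℝ).prod volume from
          Measure.volume_eq_prod ℝ ℝ] at *
        exact (inner a).map_eq)
  convert outer using 2 with p
  simp only [Prod.mk.injEq]
  refine ⟨trivial, trivial, by ring⟩

lemma mp_right (b : ℝ × ℝ × ℝ) : MeasurePreserving (fun p => Hmul p b) volume volume := by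
  have h := mp_aux b.1 b.2.1 b.2.2 (-b.2.1/2) (b.1/2)
  convert h using 2 with p
  simp only [Hmul, Prod.mk.injEq]
  refine ⟨trivial, trivial, by ring⟩

lemma mp_left (b : ℝ × ℝ × ℝ) : MeasurePreserving (fun p => Hmul b p) volume volume := by
  have h := mp_aux b.1 b.2.1 b.2.2 (b.2.1/2) (-b.1/2)
  convert h using 2 with p
  simp only [Hmul, Prod.mk.injEq]
  refine ⟨by ring, by ring, by ring⟩


lemma meas_Q : MeasurableSet Q :=
  measurableSet_Icc.prod (measurableSet_Icc.prod measurableSet_Icc)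

lemma vol_Q : volume Q = ENNReal.ofReal 2 := by
  rw [Q, Measure.volume_eq_prod, Measure.prod_prod, Measure.volume_eq_prod, Measure.prod_prod]
  simp [Real.volume_Icc]

lemma phi_one : phi 1 = fun p => Q.indicator (fun _ => (Real.sqrt 2)⁻¹) p := by
  simp [phi]

lemma phi_succ (n : ℕ) (hn : 1 ≤ n) : phi (n + 1) = Hconv (phi n) (phi 1) := by
  obtain ⟨m, rfl⟩ : ∃ m, n = m + 1 := ⟨n - 1, by omega⟩
  exact phi.eq_3 m

lemma phi_meas : ∀ n, Measurable (phi n) := by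
  intro n
  induction n using Nat.strong_induction_on with
  | _ n ih =>
    match n with
    | 0 => simpa [phi] using measurable_const
    | 1 =>
      rw [phi_one]
      exact (measurable_const.indicator meas_Q)
    | (m + 2) =>
      rw [show phi (m + 2) = Hconv (phi (m + 1)) (phi 1) from phi_succ (m + 1) (by omega)]
      have h1 : Measurable (phi (m + 1)) := ih _ (by omega)
      have h2 : Measurable (phi 1) := by
        rw [phi_one]; exact measurable_const.indicator meas_Q
      have hsm : StronglyMeasurable
          (fun z : (ℝ × ℝ × ℝ) × (ℝ × ℝ × ℝ) => phi (m+1) (Hmul z.1 (Hinv z.2)) * phi 1 z.2) := by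
        refine Measurable.stronglyMeasurable ?_
        exact ((h1.comp Hcont_pair.measurable).mul (h2.comp measurable_snd))
      exact hsm.integral_prod_right'.measurable

lemma phi_one_abs_le (q : ℝ × ℝ × ℝ) :
    |phi 1 q| ≤ Q.indicator (fun _ => (Real.sqrt 2)⁻¹) q := by
  rw [phi_one]
  simp only []
  by_cases h : q ∈ Q
  · simp [Set.indicator_of_mem h, abs_of_nonneg, Real.sqrt_nonneg]
  · simp [Set.indicator_of_notMem h]

lemma integrable_indicator_const (C : ℝ) :
    Integrable (fun q => Q.indicator (fun _ => C) q) volume := by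
  rw [MeasureTheory.integrable_indicator_iff meas_Q]
  exact integrableOn_const (by rw [vol_Q]; exact ENNReal.ofReal_ne_top)

lemma conv_term_integrable (f : ℝ × ℝ × ℝ → ℝ) (hf : Measurable f) (C : ℝ)
    (hC : ∀ p, |f p| ≤ C) (r : ℝ × ℝ × ℝ) :
    Integrable (fun q => f (Hmul r (Hinv q)) * phi 1 q) volume := by
  have hmeas : AEStronglyMeasurable (fun q => f (Hmul r (Hinv q)) * phi 1 q) volume := by
    have hc : Continuous (fun q : ℝ × ℝ × ℝ => Hmul r (Hinv q)) := by
      unfold Hmul Hinv; fun_prop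
    have h2 : Measurable (phi 1) := by rw [phi_one]; exact measurable_const.indicator meas_Q
    exact ((hf.comp hc.measurable).mul h2).aestronglyMeasurable
  refine Integrable.mono' (g := fun q => Q.indicator (fun _ => C * (Real.sqrt 2)⁻¹) q)
    (integrable_indicator_const _) hmeas (ae_of_all _ fun q => ?_)
  have h0 : (0:ℝ) ≤ C := le_trans (abs_nonneg _) (hC r)
  rw [Real.norm_eq_abs, abs_mul]
  calc |f (Hmul r (Hinv q))| * |phi 1 q|
      ≤ C * Q.indicator (fun _ => (Real.sqrt 2)⁻¹) q :=
        mul_le_mul (hC _) (phi_one_abs_le q) (abs_nonneg _) h0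
    _ ≤ Q.indicator (fun _ => C * (Real.sqrt 2)⁻¹) q := by
        by_cases h : q ∈ Q
        · rw [Set.indicator_of_mem h, Set.indicator_of_mem h]
        · rw [Set.indicator_of_notMem h, Set.indicator_of_notMem h]; simp

lemma phi_bdd : ∀ n, ∃ C : ℝ, 0 ≤ C ∧ ∀ p, |phi n p| ≤ C := by
  intro n
  induction n using Nat.strong_induction_on with
  | _ n ih =>
    match n with
    | 0 => exact ⟨0, le_refl _, fun p => by simp [phi]⟩
    | 1 =>
      refine ⟨(Real.sqrt 2)⁻¹, by positivity, fun p => ?_⟩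
      refine le_trans (phi_one_abs_le p) ?_
      exact Set.indicator_le_self' (fun _ _ => by positivity) p
    | (m + 2) =>
      obtain ⟨C, hC0, hC⟩ := ih (m + 1) (by omega)
      refine ⟨C * (Real.sqrt 2)⁻¹ * 2, by positivity, fun p => ?_⟩
      rw [phi.eq_3]
      calc |Hconv (phi (m+1)) (phi 1) p|
          ≤ ∫ q, |phi (m+1) (Hmul p (Hinv q)) * phi 1 q| := by
            have := norm_integral_le_integral_norm
              (μ := volume) (fun q => phi (m+1) (Hmul p (Hinv q)) * phi 1 q)
            simpa [Real.norm_eq_abs, Hconv, abs_mul] using this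
        _ ≤ ∫ q, Q.indicator (fun _ => C * (Real.sqrt 2)⁻¹) q := by
            have h1 : Measurable (phi (m+1)) := phi_meas (m+1)
            refine integral_mono ((conv_term_integrable _ h1 C hC p).abs)
              (integrable_indicator_const _) (fun q => ?_)
            rw [abs_mul]
            calc |phi (m+1) (Hmul p (Hinv q))| * |phi 1 q|
                ≤ C * Q.indicator (fun _ => (Real.sqrt 2)⁻¹) q :=
                  mul_le_mul (hC _) (phi_one_abs_le q) (abs_nonneg _) hC0
              _ ≤ _ := by
                  by_cases h : q ∈ Q
                  · rw [Set.indicator_of_mem h, Set.indicator_of_mem h]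
                  · rw [Set.indicator_of_notMem h, Set.indicator_of_notMem h]; simp
        _ = C * (Real.sqrt 2)⁻¹ * 2 := by
            rw [MeasureTheory.integral_indicator_const _ meas_Q, measureReal_def, vol_Q]
            simp [ENNReal.toReal_ofReal]
            ring

lemma ofReal_sq (x : ℝ) : ENNReal.ofReal (x ^ 2) = (‖x‖₊ : ℝ≥0∞) ^ 2 := by
  rw [← enorm_eq_nnnorm, Real.enorm_eq_ofReal_abs, sq, sq, ← ENNReal.ofReal_mul (abs_nonneg x), abs_mul_abs_self]

lemma rpow_two' (x : ℝ≥0∞) : x ^ (2:ℝ) = x ^ (2:ℕ) := by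
  rw [show (2:ℝ) = ((2:ℕ):ℝ) by norm_num, ENNReal.rpow_natCast]

lemma young (f : ℝ × ℝ × ℝ → ℝ) (hf : Measurable f) :
    ∫⁻ p, ENNReal.ofReal ((Hconv f (phi 1) p) ^ 2) ≤ 2 * ∫⁻ p, ENNReal.ofReal ((f p) ^ 2) := by
  classical
  set χ : (ℝ × ℝ × ℝ) → ℝ≥0∞ := Q.indicator 1 with hχdef
  have hχmeas : Measurable χ := measurable_const.indicator meas_Q
  have hχ_sq : ∀ q, χ q * χ q = χ q := by
    intro q; by_cases h : q ∈ Q <;> simp [hχdef, h]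
  have hχ_ne_top : ∀ q, χ q ≠ ⊤ := by
    intro q; by_cases h : q ∈ Q <;> simp [hχdef, h]
  have hχ_int : ∫⁻ q, χ q = ENNReal.ofReal 2 := by
    rw [hχdef, lintegral_indicator_one meas_Q, vol_Q]
  set r : ℝ≥0∞ := ENNReal.ofReal (Real.sqrt 2)⁻¹ with hrdef
  set F : (ℝ × ℝ × ℝ) → (ℝ × ℝ × ℝ) → ℝ≥0∞ :=
    fun p q => (‖f (Hmul p (Hinv q))‖₊ : ℝ≥0∞) with hFdef
  have hFmeas : ∀ p, Measurable (F p) := by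
    intro p
    have hc : Continuous (fun q : ℝ × ℝ × ℝ => Hmul p (Hinv q)) := by
      unfold Hmul Hinv; fun_prop
    exact (hf.comp hc.measurable).enorm
  have hphi1 : ∀ q, (‖phi 1 q‖₊ : ℝ≥0∞) = r * χ q := by
    intro q; rw [phi_one]
    by_cases h : q ∈ Q
    · simp only [Set.indicator_of_mem h, hχdef, hrdef]
      rw [← enorm_eq_nnnorm, Real.enorm_eq_ofReal_abs, abs_of_nonneg (by positivity)]
      simp [Set.indicator_of_mem h]
    · simp [hχdef, Set.indicator_of_notMem h]
  -- Step A
  have stepA : ∀ p, (‖Hconv f (phi 1) p‖₊ : ℝ≥0∞) ≤ r * ∫⁻ q, F p q * χ q := by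
    intro p
    calc (‖Hconv f (phi 1) p‖₊ : ℝ≥0∞)
        ≤ ∫⁻ q, ‖f (Hmul p (Hinv q)) * phi 1 q‖₊ :=
          enorm_integral_le_lintegral_enorm _
      _ = ∫⁻ q, r * (F p q * χ q) := by
          refine lintegral_congr fun q => ?_
          rw [nnnorm_mul, ENNReal.coe_mul, hphi1 q, hFdef]
          ring
      _ = r * ∫⁻ q, F p q * χ q :=
          lintegral_const_mul' r _ ENNReal.ofReal_ne_top
  -- Step B : Cauchy-Schwarz
  have stepB : ∀ p, (∫⁻ q, F p q * χ q) ^ 2 ≤ ENNReal.ofReal 2 * ∫⁻ q, (F p q) ^ 2 * χ q := by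
    intro p
    have hconj : Real.HolderConjugate 2 2 := Real.HolderConjugate.two_two
    have hH := ENNReal.lintegral_mul_le_Lp_mul_Lq volume hconj
      (((hFmeas p).mul hχmeas).aemeasurable) hχmeas.aemeasurable
    have hlhs : ∫⁻ q, ((fun q => F p q * χ q) * χ) q = ∫⁻ q, F p q * χ q := by
      refine lintegral_congr fun q => ?_
      simp only [Pi.mul_apply, mul_assoc, hχ_sq q]
    simp only [Pi.mul_apply, mul_assoc, hχ_sq] at hH
    have hr1 : ∫⁻ q, (F p q * χ q) ^ (2:ℝ) = ∫⁻ q, (F p q) ^ 2 * χ q := by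
      refine lintegral_congr fun q => ?_
      rw [rpow_two', mul_pow, sq (χ q), hχ_sq q]
    have hr2 : ∫⁻ q, (χ q) ^ (2:ℝ) = ENNReal.ofReal 2 := by
      rw [← hχ_int]
      refine lintegral_congr fun q => ?_
      rw [rpow_two', sq (χ q), hχ_sq q]
    rw [hr1, hr2] at hH
    calc (∫⁻ q, F p q * χ q) ^ 2
        ≤ ((∫⁻ q, (F p q) ^ 2 * χ q) ^ ((1:ℝ)/2) * (ENNReal.ofReal 2) ^ ((1:ℝ)/2)) ^ 2 :=
          pow_le_pow_left₀ zero_le hH 2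
      _ = ENNReal.ofReal 2 * ∫⁻ q, (F p q) ^ 2 * χ q := by
          rw [mul_pow, ← ENNReal.rpow_natCast ((∫⁻ q, (F p q) ^ 2 * χ q) ^ ((1:ℝ)/2)) 2,
            ← ENNReal.rpow_natCast ((ENNReal.ofReal 2) ^ ((1:ℝ)/2)) 2,
            ← ENNReal.rpow_mul, ← ENNReal.rpow_mul]
          norm_num [mul_comm]
  -- Step C : pointwise bound
  have stepC : ∀ p, ENNReal.ofReal ((Hconv f (phi 1) p) ^ 2) ≤ ∫⁻ q, (F p q) ^ 2 * χ q := by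
    intro p
    have hr2 : r ^ 2 * ENNReal.ofReal 2 = 1 := by
      rw [hrdef, ← ENNReal.ofReal_pow (by positivity), ← ENNReal.ofReal_mul (by positivity)]
      rw [inv_pow, Real.sq_sqrt (by norm_num : (0:ℝ) ≤ 2)]
      norm_num
    calc ENNReal.ofReal ((Hconv f (phi 1) p) ^ 2)
        = (‖Hconv f (phi 1) p‖₊ : ℝ≥0∞) ^ 2 := ofReal_sq _
      _ ≤ (r * ∫⁻ q, F p q * χ q) ^ 2 := pow_le_pow_left₀ zero_le (stepA p) 2
      _ = r ^ 2 * (∫⁻ q, F p q * χ q) ^ 2 := mul_pow _ _ _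
      _ ≤ r ^ 2 * (ENNReal.ofReal 2 * ∫⁻ q, (F p q) ^ 2 * χ q) :=
          mul_le_mul_right (stepB p) _
      _ = (r ^ 2 * ENNReal.ofReal 2) * ∫⁻ q, (F p q) ^ 2 * χ q := by ring
      _ = ∫⁻ q, (F p q) ^ 2 * χ q := by rw [hr2, one_mul]
  -- Step D : integrate and swap
  calc ∫⁻ p, ENNReal.ofReal ((Hconv f (phi 1) p) ^ 2)
      ≤ ∫⁻ p, ∫⁻ q, (F p q) ^ 2 * χ q := lintegral_mono stepC
    _ = ∫⁻ q, ∫⁻ p, (F p q) ^ 2 * χ q := by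
        refine lintegral_lintegral_swap ?_
        exact (((hf.comp Hcont_pair.measurable).enorm.pow_const 2).mul
          (hχmeas.comp measurable_snd)).aemeasurable
    _ = ∫⁻ q, (∫⁻ p, ENNReal.ofReal ((f p) ^ 2)) * χ q := by
        refine lintegral_congr fun q => ?_
        rw [lintegral_mul_const' (χ q) _ (hχ_ne_top q)]
        congr 1
        have := (mp_right (Hinv q)).lintegral_comp
          (f := fun x => (‖f x‖₊ : ℝ≥0∞) ^ 2) (hf.enorm.pow_const 2)
        rw [this]
        exact lintegral_congr fun x => (ofReal_sq (f x)).symm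
    _ = (∫⁻ p, ENNReal.ofReal ((f p) ^ 2)) * ∫⁻ q, χ q :=
        lintegral_const_mul'' _ hχmeas.aemeasurable
    _ = 2 * ∫⁻ p, ENNReal.ofReal ((f p) ^ 2) := by
        rw [hχ_int, mul_comm]
        norm_num


noncomputable def av (j : ℤ × ℤ × ℤ) : ℝ × ℝ × ℝ :=
  ((2 * j.1 : ℝ), (j.2.1 : ℝ), (j.2.2 : ℝ))

noncomputable def Aset (j : ℤ × ℤ × ℤ) : Set (ℝ × ℝ × ℝ) :=
  (fun p => Hmul (Hinv (av j)) p) ⁻¹' Q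

lemma meas_Aset (j : ℤ × ℤ × ℤ) : MeasurableSet (Aset j) :=
  meas_Q.preimage (Hcont_left (Hinv (av j))).measurable

lemma vol_Aset (j : ℤ × ℤ × ℤ) : volume (Aset j) = ENNReal.ofReal 2 := by
  rw [Aset, (mp_left (Hinv (av j))).measure_preimage meas_Q.nullMeasurableSet, vol_Q]

/-- null intersection of distinct twisted translates -/
lemma vol_inter (i j : ℤ × ℤ × ℤ) (hij : i ≠ j) : volume (Aset i ∩ Aset j) = 0 := by
  classical
  set b : ℝ × ℝ × ℝ := Hmul (Hinv (av i)) (av j) with hbdef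
  have hset : Aset i ∩ Aset j =
      (fun p => Hmul (Hinv (av i)) p) ⁻¹' (Q ∩ (fun s => Hmul (Hinv b) s) ⁻¹' Q) := by
    ext p
    simp only [Aset, Set.mem_inter_iff, Set.mem_preimage]
    have key : Hmul (Hinv (av j)) p = Hmul (Hinv b) (Hmul (Hinv (av i)) p) := by
      rw [← Hmul_assoc]
      congr 1
      rw [hbdef, ← Hinv_Hmul, Hmul_cancel_left]
    rw [key]
  rw [hset, (mp_left (Hinv (av i))).measure_preimage]
  swap
  · exact (meas_Q.inter (meas_Q.preimage (Hcont_left (Hinv b)).measurable)).nullMeasurableSet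
  -- now estimate vol (Q ∩ D)
  obtain ⟨k, l, m⟩ := i
  obtain ⟨k', l', m'⟩ := j
  by_cases hk : k = k'
  · by_cases hl : l = l'
    · -- pure t-translation
      have hm : m ≠ m' := by
        intro h; exact hij (by simp [hk, hl, h])
      subst hk; subst hl
      have hb : b = ((0:ℝ), (0:ℝ), ((m' - m : ℤ) : ℝ)) := by
        rw [hbdef]
        simp only [av, Hmul, Hinv, Prod.mk.injEq]
        refine ⟨by ring, by ring, by push_cast; ring⟩
      have hsub : Q ∩ (fun s => Hmul (Hinv b) s) ⁻¹' Q ⊆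
          (Set.univ : Set ℝ) ×ˢ ((Set.univ : Set ℝ) ×ˢ
            (Set.Icc (0:ℝ) 1 ∩ Set.Icc (((m' - m : ℤ) : ℝ)) (((m' - m : ℤ) : ℝ) + 1))) := by
        rintro ⟨x, y, t⟩ ⟨hp1, hp2⟩
        simp only [Q, hb, Hmul, Hinv, Set.mem_preimage, Set.mem_prod, Set.mem_Icc] at hp1 hp2
        refine ⟨trivial, trivial, ⟨hp1.2.2.1, hp1.2.2.2⟩, ?_, ?_⟩ <;>
          [linarith [hp2.2.2.1]; linarith [hp2.2.2.2]]
      refine le_antisymm (le_trans (measure_mono hsub) ?_) zero_le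
      rw [Measure.volume_eq_prod, Measure.prod_prod, Measure.volume_eq_prod, Measure.prod_prod,
        Set.Icc_inter_Icc, Real.volume_Icc]
      have habs : (1:ℝ) ≤ |((m' - m : ℤ) : ℝ)| := by
        rw [← Int.cast_abs]
        exact_mod_cast Int.one_le_abs (by omega)
      have : min 1 (((m' - m : ℤ) : ℝ) + 1) - max 0 ((m' - m : ℤ) : ℝ) ≤ 0 := by
        rcases le_abs.mp habs with h | h
        · have := le_max_right (0:ℝ) ((m' - m : ℤ) : ℝ)
          have := min_le_left (1:ℝ) (((m' - m : ℤ) : ℝ) + 1)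
          linarith
        · have := min_le_right (1:ℝ) (((m' - m : ℤ) : ℝ) + 1)
          have := le_max_left (0:ℝ) ((m' - m : ℤ) : ℝ)
          linarith
      rw [ENNReal.ofReal_eq_zero.2 this]
      simp
    · -- y coordinates differ
      have hb2 : b.2.1 = ((l' - l : ℤ) : ℝ) := by
        rw [hbdef]; simp only [av, Hmul, Hinv]; push_cast; ring
      have hsub : Q ∩ (fun s => Hmul (Hinv b) s) ⁻¹' Q ⊆
          (Set.univ : Set ℝ) ×ˢ ((Set.Icc (0:ℝ) 1 ∩ Set.Icc (((l' - l : ℤ) : ℝ)) (((l' - l : ℤ) : ℝ) + 1)) ×ˢ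
            (Set.univ : Set ℝ)) := by
        rintro ⟨x, y, t⟩ ⟨hp1, hp2⟩
        simp only [Q, Hmul, Hinv, Set.mem_preimage, Set.mem_prod, Set.mem_Icc] at hp1 hp2
        have h1 := hp2.2.1
        rw [hb2] at h1
        exact ⟨trivial, ⟨⟨hp1.2.1.1, hp1.2.1.2⟩, by constructor <;> linarith [h1.1, h1.2]⟩, trivial⟩
      refine le_antisymm (le_trans (measure_mono hsub) ?_) zero_le
      rw [Measure.volume_eq_prod, Measure.prod_prod, Measure.volume_eq_prod, Measure.prod_prod,
        Set.Icc_inter_Icc, Real.volume_Icc]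
      have habs : (1:ℝ) ≤ |((l' - l : ℤ) : ℝ)| := by
        rw [← Int.cast_abs]
        exact_mod_cast Int.one_le_abs (by omega)
      have : min 1 (((l' - l : ℤ) : ℝ) + 1) - max 0 ((l' - l : ℤ) : ℝ) ≤ 0 := by
        rcases le_abs.mp habs with h | h
        · have := le_max_right (0:ℝ) ((l' - l : ℤ) : ℝ)
          have := min_le_left (1:ℝ) (((l' - l : ℤ) : ℝ) + 1)
          linarith
        · have := min_le_right (1:ℝ) (((l' - l : ℤ) : ℝ) + 1)
          have := le_max_left (0:ℝ) ((l' - l : ℤ) : ℝ)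
          linarith
      rw [ENNReal.ofReal_eq_zero.2 this]
      simp
  · -- x coordinates differ
    have hb1 : b.1 = 2 * ((k' - k : ℤ) : ℝ) := by
      rw [hbdef]; simp only [av, Hmul, Hinv]; push_cast; ring
    have hsub : Q ∩ (fun s => Hmul (Hinv b) s) ⁻¹' Q ⊆
        (Set.Icc (0:ℝ) 2 ∩ Set.Icc (2 * ((k' - k : ℤ) : ℝ)) (2 * ((k' - k : ℤ) : ℝ) + 2)) ×ˢ
          ((Set.univ : Set ℝ) ×ˢ (Set.univ : Set ℝ)) := by
      rintro ⟨x, y, t⟩ ⟨hp1, hp2⟩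
      simp only [Q, Hmul, Hinv, Set.mem_preimage, Set.mem_prod, Set.mem_Icc] at hp1 hp2
      have h1 := hp2.1
      rw [hb1] at h1
      exact ⟨⟨⟨hp1.1.1, hp1.1.2⟩, by constructor <;> linarith [h1.1, h1.2]⟩, trivial, trivial⟩
    refine le_antisymm (le_trans (measure_mono hsub) ?_) zero_le
    rw [Measure.volume_eq_prod, Measure.prod_prod, Set.Icc_inter_Icc, Real.volume_Icc]
    have habs : (2:ℝ) ≤ |2 * ((k' - k : ℤ) : ℝ)| := by
      rw [abs_mul, abs_two, ← Int.cast_abs]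
      have : (1:ℝ) ≤ ((|k' - k| : ℤ) : ℝ) := by exact_mod_cast Int.one_le_abs (by omega)
      linarith
    have : min 2 (2 * ((k' - k : ℤ) : ℝ) + 2) - max 0 (2 * ((k' - k : ℤ) : ℝ)) ≤ 0 := by
      rcases le_abs.mp habs with h | h
      · have := le_max_right (0:ℝ) (2 * ((k' - k : ℤ) : ℝ))
        have := min_le_left (2:ℝ) (2 * ((k' - k : ℤ) : ℝ) + 2)
        linarith
      · have := min_le_right (2:ℝ) (2 * ((k' - k : ℤ) : ℝ) + 2)
        have := le_max_left (0:ℝ) (2 * ((k' - k : ℤ) : ℝ))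
        linarith
    rw [ENNReal.ofReal_eq_zero.2 this]
    simp

lemma sq_sum_of_unique {ι : Type*} (F : Finset ι) (d : ι → ℝ)
    (h : ∀ i ∈ F, ∀ j ∈ F, d i ≠ 0 → d j ≠ 0 → i = j) :
    (∑ i ∈ F, d i) ^ 2 = ∑ i ∈ F, (d i) ^ 2 := by
  classical
  by_cases hz : ∀ i ∈ F, d i = 0
  · rw [Finset.sum_eq_zero hz, Finset.sum_eq_zero (fun i hi => by rw [hz i hi]; ring)]
    ring
  · push_neg at hz
    obtain ⟨i₀, hi₀F, hi₀⟩ := hz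
    have h1 : ∑ i ∈ F, d i = d i₀ :=
      Finset.sum_eq_single_of_mem i₀ hi₀F (fun j hj hne => by
        by_contra hdj
        exact hne (h j hj i₀ hi₀F hdj hi₀))
    have h2 : ∑ i ∈ F, (d i) ^ 2 = (d i₀) ^ 2 :=
      Finset.sum_eq_single_of_mem i₀ hi₀F (fun j hj hne => by
        by_contra hdj
        exact hne (h j hj i₀ hi₀F (fun hz => hdj (by rw [hz]; ring)) hi₀))
    rw [h1, h2]

lemma base (F : Finset (ℤ × ℤ × ℤ)) (c : ℤ × ℤ × ℤ → ℝ) :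
    ∫⁻ p, ENNReal.ofReal ((∑ j ∈ F, c j * Ltr (av j) (phi 1) p) ^ 2) =
      ENNReal.ofReal (∑ j ∈ F, (c j) ^ 2) := by
  classical
  set N : Set (ℝ × ℝ × ℝ) :=
    ⋃ i ∈ F, ⋃ j ∈ F, (if i = j then (∅ : Set (ℝ × ℝ × ℝ)) else Aset i ∩ Aset j) with hNdef
  have hN : volume N = 0 := by
    refine le_antisymm ?_ zero_le
    calc volume N ≤ ∑ i ∈ F, volume (⋃ j ∈ F, (if i = j then (∅ : Set (ℝ × ℝ × ℝ)) else Aset i ∩ Aset j)) :=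
          measure_biUnion_finset_le F _
      _ ≤ ∑ i ∈ F, ∑ j ∈ F, volume (if i = j then (∅ : Set (ℝ × ℝ × ℝ)) else Aset i ∩ Aset j) :=
          Finset.sum_le_sum fun i _ => measure_biUnion_finset_le F _
      _ = 0 := by
          refine Finset.sum_eq_zero fun i _ => Finset.sum_eq_zero fun j _ => ?_
          by_cases hij : i = j
          · simp [hij]
          · simpa [hij] using vol_inter i j hij
  have hae : ∀ᵐ p : ℝ × ℝ × ℝ, p ∉ N := measure_eq_zero_iff_ae_notMem.mp hN
  have hptwise : ∀ p, p ∉ N →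
      ENNReal.ofReal ((∑ j ∈ F, c j * Ltr (av j) (phi 1) p) ^ 2) =
      ∑ j ∈ F, (Aset j).indicator (fun _ => ENNReal.ofReal ((c j) ^ 2 * 2⁻¹)) p := by
    intro p hp
    have hu : ∀ i ∈ F, ∀ j ∈ F,
        c i * Ltr (av i) (phi 1) p ≠ 0 → c j * Ltr (av j) (phi 1) p ≠ 0 → i = j := by
      intro i hi j hj hdi hdj
      by_contra hij
      have hpi : p ∈ Aset i := by
        by_contra hmem
        apply hdi
        have : Hmul (Hinv (av i)) p ∉ Q := hmem
        simp only [Ltr, phi_one]; rw [Set.indicator_of_notMem this]; ring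
      have hpj : p ∈ Aset j := by
        by_contra hmem
        apply hdj
        have : Hmul (Hinv (av j)) p ∉ Q := hmem
        simp only [Ltr, phi_one]; rw [Set.indicator_of_notMem this]; ring
      apply hp
      rw [hNdef]
      refine Set.mem_biUnion hi (Set.mem_biUnion hj ?_)
      rw [if_neg hij]
      exact ⟨hpi, hpj⟩
    rw [sq_sum_of_unique F _ hu,
      ENNReal.ofReal_sum_of_nonneg (fun i _ => sq_nonneg _)]
    refine Finset.sum_congr rfl fun j _ => ?_
    by_cases hmem : p ∈ Aset j
    · have hQ : Hmul (Hinv (av j)) p ∈ Q := hmem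
      simp only [Ltr, phi_one]; rw [Set.indicator_of_mem hQ, Set.indicator_of_mem hmem]
      congr 1
      rw [mul_pow, inv_pow, Real.sq_sqrt (by norm_num : (0:ℝ) ≤ 2)]
    · have hQ : Hmul (Hinv (av j)) p ∉ Q := hmem
      simp only [Ltr, phi_one]; rw [Set.indicator_of_notMem hQ, Set.indicator_of_notMem hmem]
      simp
  calc ∫⁻ p, ENNReal.ofReal ((∑ j ∈ F, c j * Ltr (av j) (phi 1) p) ^ 2)
      = ∫⁻ p, ∑ j ∈ F, (Aset j).indicator (fun _ => ENNReal.ofReal ((c j) ^ 2 * 2⁻¹)) p :=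
        lintegral_congr_ae (hae.mono fun p hp => hptwise p hp)
    _ = ∑ j ∈ F, ∫⁻ p, (Aset j).indicator (fun _ => ENNReal.ofReal ((c j) ^ 2 * 2⁻¹)) p :=
        lintegral_finset_sum _ (fun j _ => measurable_const.indicator (meas_Aset j))
    _ = ∑ j ∈ F, ENNReal.ofReal ((c j) ^ 2) := by
        refine Finset.sum_congr rfl fun j _ => ?_
        rw [lintegral_indicator_const (meas_Aset j), vol_Aset j,
          ← ENNReal.ofReal_mul (by positivity)]
        congr 1
        ring
    _ = ENNReal.ofReal (∑ j ∈ F, (c j) ^ 2) :=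
        (ENNReal.ofReal_sum_of_nonneg (fun i _ => sq_nonneg _)).symm

lemma Sfun_succ (n : ℕ) (hn : 1 ≤ n) (F : Finset (ℤ × ℤ × ℤ)) (c : ℤ × ℤ × ℤ → ℝ)
    (p : ℝ × ℝ × ℝ) :
    ∑ j ∈ F, c j * Ltr (av j) (phi (n + 1)) p
      = Hconv (fun r => ∑ j ∈ F, c j * Ltr (av j) (phi n) r) (phi 1) p := by
  obtain ⟨C, hC0, hC⟩ := phi_bdd n
  have hmeas := phi_meas n
  rw [phi_succ n hn]
  calc ∑ j ∈ F, c j * Ltr (av j) (Hconv (phi n) (phi 1)) p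
      = ∑ j ∈ F, ∫ q, c j * (phi n (Hmul (Hmul (Hinv (av j)) p) (Hinv q)) * phi 1 q) := by
        refine Finset.sum_congr rfl fun j _ => ?_
        simp only [Ltr, Hconv]
        rw [integral_const_mul]
    _ = ∫ q, ∑ j ∈ F, c j * (phi n (Hmul (Hmul (Hinv (av j)) p) (Hinv q)) * phi 1 q) :=
        (integral_finset_sum F fun j _ =>
          ((conv_term_integrable (phi n) hmeas C hC (Hmul (Hinv (av j)) p)).const_mul (c j))).symm
    _ = Hconv (fun r => ∑ j ∈ F, c j * Ltr (av j) (phi n) r) (phi 1) p := by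
        simp only [Hconv, Ltr]
        congr 1
        funext q
        rw [Finset.sum_mul]
        refine Finset.sum_congr rfl fun j _ => ?_
        rw [← Hmul_assoc, mul_assoc]

lemma key (n : ℕ) (hn : 1 ≤ n) (F : Finset (ℤ × ℤ × ℤ)) (c : ℤ × ℤ × ℤ → ℝ) :
    ∫⁻ p, ENNReal.ofReal ((∑ j ∈ F, c j * Ltr (av j) (phi n) p) ^ 2)
      ≤ 2 ^ (n - 1) * ENNReal.ofReal (∑ j ∈ F, (c j) ^ 2) := by
  induction n with
  | zero => exact absurd hn (by norm_num)
  | succ m ih =>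
    by_cases hm : m = 0
    · subst hm
      simpa using (base F c).le
    · have hm1 : 1 ≤ m := by omega
      have hS : Measurable (fun r => ∑ j ∈ F, c j * Ltr (av j) (phi m) r) := by
        refine Finset.measurable_sum _ fun j _ => ?_
        exact ((phi_meas m).comp (Hcont_left (Hinv (av j))).measurable).const_mul (c j)
      calc ∫⁻ p, ENNReal.ofReal ((∑ j ∈ F, c j * Ltr (av j) (phi (m + 1)) p) ^ 2)
          = ∫⁻ p, ENNReal.ofReal
              ((Hconv (fun r => ∑ j ∈ F, c j * Ltr (av j) (phi m) r) (phi 1) p) ^ 2) :=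
            lintegral_congr fun p => by rw [Sfun_succ m hm1 F c p]
        _ ≤ 2 * ∫⁻ p, ENNReal.ofReal ((∑ j ∈ F, c j * Ltr (av j) (phi m) p) ^ 2) :=
            young _ hS
        _ ≤ 2 * (2 ^ (m - 1) * ENNReal.ofReal (∑ j ∈ F, (c j) ^ 2)) :=
            mul_le_mul_right (ih hm1) 2
        _ = 2 ^ (m + 1 - 1) * ENNReal.ofReal (∑ j ∈ F, (c j) ^ 2) := by
            rw [← mul_assoc]
            congr 1
            rw [show m + 1 - 1 = (m - 1) + 1 by omega, pow_succ']

theorem upper_riesz_bound (n : ℕ) (hn : 1 ≤ n) :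
    ∃ B : ℝ, 0 < B ∧ B = 2 ^ (n - 1) ∧
      ∀ (F : Finset (ℤ × ℤ × ℤ)) (c : ℤ × ℤ × ℤ → ℝ),
        (∫ p : ℝ × ℝ × ℝ,
            (∑ j ∈ F, c j *
              Ltr ((2 * j.1 : ℝ), (j.2.1 : ℝ), (j.2.2 : ℝ)) (phi n) p) ^ 2) ≤
          B * ∑ j ∈ F, (c j) ^ 2 := by
  refine ⟨2 ^ (n - 1), by positivity, rfl, fun F c => ?_⟩
  have hsum_nonneg : (0:ℝ) ≤ ∑ j ∈ F, (c j) ^ 2 := Finset.sum_nonneg fun j _ => sq_nonneg _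
  show (∫ p : ℝ × ℝ × ℝ, (∑ j ∈ F, c j * Ltr (av j) (phi n) p) ^ 2) ≤
    2 ^ (n - 1) * ∑ j ∈ F, (c j) ^ 2
  have hSmeas : Measurable (fun p => ∑ j ∈ F, c j * Ltr (av j) (phi n) p) := by
    refine Finset.measurable_sum _ fun j _ => ?_
    exact ((phi_meas n).comp (Hcont_left (Hinv (av j))).measurable).const_mul (c j)
  by_cases hI : Integrable (fun p => (∑ j ∈ F, c j * Ltr (av j) (phi n) p) ^ 2) volume
  · rw [integral_eq_lintegral_of_nonneg_ae (ae_of_all _ fun p => sq_nonneg _)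
      (hSmeas.pow_const 2).aestronglyMeasurable]
    refine ENNReal.toReal_le_of_le_ofReal (by positivity) ?_
    refine le_trans (key n hn F c) ?_
    rw [ENNReal.ofReal_mul (by positivity), ENNReal.ofReal_pow (by norm_num)]
    norm_num
  · rw [integral_undef hI]
    positivity
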